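/- arXiv:2504.03456 — 6 statements merged into one kernel-verified Lean document; each statement's English description precedes it below -/
import Mathlib

section
/- Let n ≥ 2 and let d = (d_1, …, d_n) be integers with 2 ≤ d_1 ≤ ⋯ ≤ d_n. Then c(d) = 0 if and only if d_n − 1 > ∑_{i=1}^{n−1} (d_i − 1). -/
/-- `cCoeff d` is the coefficient of the monomial `h₁^(d₁-1) ⋯ hₙ^(dₙ-1)` in the
polynomial `∏ i, (∑_{j ≠ i} h_j)^(dᵢ-1)` in `ℤ[h₁, …, hₙ]`. -/
noncomputable def cCoeff {n : ℕ} (d : Fin n → ℕ) : ℤ :=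
  MvPolynomial.coeff (Finsupp.equivFunOnFinite.symm fun i => d i - 1)
    (∏ i : Fin n,
      (∑ j ∈ Finset.univ.erase i, (MvPolynomial.X j : MvPolynomial (Fin n) ℤ)) ^ (d i - 1))

open Finset MvPolynomial

namespace CCoeffAux

lemma single_add_sub {n : ℕ} (μ : Fin n →₀ ℕ) (j₀ : Fin n) (h : μ j₀ ≠ 0) :
    Finsupp.single j₀ 1 + (μ - Finsupp.single j₀ 1) = μ := by
  ext j
  simp only [Finsupp.add_apply, Finsupp.tsub_apply, Finsupp.single_apply]
  rcases eq_or_ne j₀ j with rfl | hj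
  · simp only [if_pos rfl]
    simp only [eq_self_iff_true, if_true]
    omega
  · simp [hj]

lemma coeff_sum_X_pow_ne_zero {n : ℕ} (s : Finset (Fin n)) :
    ∀ (k : ℕ) (μ : Fin n →₀ ℕ), (∑ j, μ j = k) → (∀ j ∉ s, μ j = 0) →
      MvPolynomial.coeff μ
        ((∑ j ∈ s, (X j : MvPolynomial (Fin n) ℕ)) ^ k) ≠ 0 := by
  intro k
  induction k with
  | zero =>
    intro μ hsum _
    have hμ : μ = 0 := by
      ext j
      exact Finset.sum_eq_zero_iff.mp hsum j (Finset.mem_univ j)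
    subst hμ
    simp
  | succ k ih =>
    intro μ hsum hsupp
    obtain ⟨j₀, hj₀⟩ : ∃ j₀, μ j₀ ≠ 0 := by
      by_contra h
      push_neg at h
      simp [h] at hsum
    have hj₀s : j₀ ∈ s := by
      by_contra h
      exact hj₀ (hsupp _ h)
    have hadd := single_add_sub μ j₀ hj₀
    rw [pow_succ, coeff_mul]
    intro h0
    rw [Finset.sum_eq_zero_iff] at h0
    have hmem : ((μ - Finsupp.single j₀ 1, Finsupp.single j₀ 1) :
        (Fin n →₀ ℕ) × (Fin n →₀ ℕ)) ∈ Finset.HasAntidiagonal.antidiagonal μ := by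
      rw [Finset.HasAntidiagonal.mem_antidiagonal, add_comm]
      exact hadd
    have h1 : coeff (Finsupp.single j₀ 1) (∑ j ∈ s, (X j : MvPolynomial (Fin n) ℕ)) ≠ 0 := by
      intro hz
      rw [MvPolynomial.coeff_sum] at hz
      have := Finset.sum_eq_zero_iff.mp hz j₀ hj₀s
      rw [coeff_X'] at this
      simp at this
    have hs1 : ∑ j, (Finsupp.single j₀ 1 : Fin n →₀ ℕ) j = 1 := by
      simp [Finsupp.single_apply]
    have hsum' : ∑ j, ((μ - Finsupp.single j₀ 1 : Fin n →₀ ℕ)) j = k := by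
      have h2 : ∑ j, ((Finsupp.single j₀ 1 : Fin n →₀ ℕ) j
          + ((μ - Finsupp.single j₀ 1 : Fin n →₀ ℕ)) j) = k + 1 := by
        rw [← hsum]
        exact Finset.sum_congr rfl fun j _ => by rw [← Finsupp.add_apply, hadd]
      rw [Finset.sum_add_distrib, hs1] at h2
      omega
    have hsupp' : ∀ j ∉ s, ((μ - Finsupp.single j₀ 1 : Fin n →₀ ℕ)) j = 0 := by
      intro j hj
      rw [Finsupp.tsub_apply, hsupp j hj, Nat.zero_sub]
    have h2 := ih (μ - Finsupp.single j₀ 1) hsum' hsupp'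
    exact Nat.mul_ne_zero h2 h1 (h0 _ hmem)

lemma coeff_prod_ne_zero {n : ℕ} {ι : Type*} [DecidableEq ι] (s : Finset ι)
    (f : ι → MvPolynomial (Fin n) ℕ) (m : ι → (Fin n →₀ ℕ))
    (h : ∀ i ∈ s, coeff (m i) (f i) ≠ 0) :
    coeff (∑ i ∈ s, m i) (∏ i ∈ s, f i) ≠ 0 := by
  induction s using Finset.cons_induction with
  | empty => simp
  | cons a s ha ih =>
    rw [Finset.sum_cons, Finset.prod_cons, coeff_mul]
    intro h0
    rw [Finset.sum_eq_zero_iff] at h0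
    have hmem : ((m a, ∑ i ∈ s, m i) : (Fin n →₀ ℕ) × (Fin n →₀ ℕ))
        ∈ Finset.HasAntidiagonal.antidiagonal (m a + ∑ i ∈ s, m i) := by
      rw [Finset.HasAntidiagonal.mem_antidiagonal]
    exact Nat.mul_ne_zero (h a (Finset.mem_cons_self a s))
      (ih fun i hi => h i (Finset.mem_cons_of_mem hi)) (h0 _ hmem)

lemma sum_card_filter {α : Type*} [Fintype α] {n : ℕ} (C : α → Prop) (Q : Fin n → α → Prop)
    [DecidablePred C] [∀ j, DecidablePred (Q j)] [∀ j, DecidablePred fun p => Q j p ∧ C p]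
    (hQ : ∀ p, ∃! j, Q j p) :
    ∑ j, (Finset.univ.filter fun p => Q j p ∧ C p).card
      = (Finset.univ.filter C).card := by
  rw [Finset.card_filter]
  rw [Finset.sum_congr rfl (fun j _ => Finset.card_filter _ _)]
  rw [Finset.sum_comm]
  refine Finset.sum_congr rfl fun p _ => ?_
  obtain ⟨j₀, hj₀, hu⟩ := hQ p
  by_cases hC : C p
  · rw [if_pos hC, Finset.sum_eq_single j₀]
    · rw [if_pos ⟨hj₀, hC⟩]
    · intro j _ hne
      rw [if_neg]
      rintro ⟨hq, -⟩
      exact hne (hu j hq)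
    · intro h
      exact absurd (Finset.mem_univ j₀) h
  · rw [if_neg hC]
    exact Finset.sum_eq_zero fun j _ => by
      rw [if_neg]
      rintro ⟨-, h⟩
      exact hC h

lemma exists_rows (n : ℕ) (e : Fin n → ℕ) (he : ∀ i, 1 ≤ e i) (l : Fin n)
    (hl : ∀ i, e i ≤ e l) (hne : (Finset.univ.erase l).Nonempty)
    (hcond : e l ≤ ∑ i ∈ Finset.univ.erase l, e i) :
    ∃ m : Fin n → (Fin n →₀ ℕ),
      (∀ i, m i i = 0) ∧ (∀ i, ∑ j, m i j = e i) ∧ (∀ j, ∑ i, m i j = e j) := by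
  classical
  set E := ∑ i, e i with hE
  have hsplit : E = e l + ∑ i ∈ Finset.univ.erase l, e i :=
    (Finset.add_sum_erase _ e (Finset.mem_univ l)).symm
  obtain ⟨i₁, hi₁⟩ := hne
  have h2k : e l + e l ≤ E := by omega
  have hkE : e l < E := by
    have h1 : 1 ≤ ∑ i ∈ Finset.univ.erase l, e i :=
      le_trans (he i₁) (Finset.single_le_sum (fun _ _ => Nat.zero_le _) hi₁)
    omega
  have hEpos : 0 < E := by omega
  haveI : NeZero E := ⟨by omega⟩
  set k : Fin E := ⟨e l, hkE⟩ with hk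
  set S : ℕ → ℕ := fun t => ∑ j ∈ Finset.univ.filter (fun j : Fin n => (j : ℕ) < t), e j with hS
  have hS0 : S 0 = 0 := by simp [hS]
  have hSmono : Monotone S := by
    intro a b hab
    apply Finset.sum_le_sum_of_subset
    intro j hj
    simp only [Finset.mem_filter, Finset.mem_univ, true_and] at hj ⊢
    omega
  have hSstep : ∀ i : Fin n, S ((i : ℕ) + 1) = S (i : ℕ) + e i := by
    intro i
    have hins : Finset.univ.filter (fun j : Fin n => (j : ℕ) < (i : ℕ) + 1)
        = insert i (Finset.univ.filter (fun j : Fin n => (j : ℕ) < (i : ℕ))) := by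
      ext j
      simp only [Finset.mem_filter, Finset.mem_insert, Finset.mem_univ, true_and, Fin.ext_iff]
      omega
    simp only [hS]
    rw [hins, Finset.sum_insert (by simp)]
    exact add_comm _ _
  have hSn : S n = E := by
    simp only [hS, hE]
    apply Finset.sum_congr _ (fun _ _ => rfl)
    ext j
    simp [j.isLt]
  have hSE : ∀ i : Fin n, S ((i : ℕ) + 1) ≤ E := fun i =>
    hSn ▸ hSmono (by omega : (i : ℕ) + 1 ≤ n)
  -- unique block containing a position
  have hblock : ∀ q : ℕ, q < E → ∃! i : Fin n, S (i : ℕ) ≤ q ∧ q < S ((i : ℕ) + 1) := by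
    intro q hq
    have hn0 : 0 < n := l.pos
    have h0 : S 0 ≤ q := by omega
    have hgs : S (Nat.findGreatest (fun t => S t ≤ q) n) ≤ q :=
      Nat.findGreatest_spec (P := fun t => S t ≤ q) (Nat.zero_le n) h0
    have hgle : Nat.findGreatest (fun t => S t ≤ q) n ≤ n := Nat.findGreatest_le n
    have hgn : Nat.findGreatest (fun t => S t ≤ q) n < n := by
      rcases eq_or_lt_of_le hgle with h | h
      · rw [h, hSn] at hgs
        omega
      · exact h
    have hgq : q < S (Nat.findGreatest (fun t => S t ≤ q) n + 1) := by
      by_contra h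
      push_neg at h
      exact Nat.findGreatest_is_greatest (P := fun t => S t ≤ q) (Nat.lt_succ_self _) (by omega) h
    obtain ⟨t, htn, hts, htq⟩ : ∃ t, t < n ∧ S t ≤ q ∧ q < S (t + 1) :=
      ⟨_, hgn, hgs, hgq⟩
    refine ⟨⟨t, htn⟩, ⟨hts, htq⟩, ?_⟩
    rintro i ⟨h1, h2⟩
    apply Fin.ext
    show (i : ℕ) = t
    by_contra hne'
    rcases Nat.lt_or_ge (i : ℕ) t with h | h
    · have := hSmono (by omega : (i : ℕ) + 1 ≤ t)
      omega
    · have := hSmono (by omega : t + 1 ≤ (i : ℕ))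
      omega
  -- cardinality of a block
  have hBcard : ∀ i : Fin n,
      (Finset.univ.filter (fun p : Fin E => S (i : ℕ) ≤ (p : ℕ) ∧ (p : ℕ) < S ((i : ℕ) + 1))).card
        = e i := by
    intro i
    have hb : S ((i : ℕ) + 1) ≤ E := hSE i
    have key : (Finset.univ.filter
        (fun p : Fin E => S (i : ℕ) ≤ (p : ℕ) ∧ (p : ℕ) < S ((i : ℕ) + 1))).card
        = (Finset.Ico (S (i : ℕ)) (S ((i : ℕ) + 1))).card := by
      apply Finset.card_nbij' (fun p : Fin E => (p : ℕ))
        (fun q : ℕ => (⟨q % E, Nat.mod_lt _ hEpos⟩ : Fin E))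
      · intro p hp
        simp only [Finset.mem_coe, Finset.mem_filter, Finset.mem_univ, true_and] at hp
        exact Finset.mem_Ico.mpr hp
      · intro q hq
        rw [Finset.mem_coe, Finset.mem_Ico] at hq
        have hqE : q < E := lt_of_lt_of_le hq.2 hb
        simp only [Finset.mem_coe, Finset.mem_filter, Finset.mem_univ, true_and]
        show S (i : ℕ) ≤ q % E ∧ q % E < S ((i : ℕ) + 1)
        rw [Nat.mod_eq_of_lt hqE]
        exact hq
      · intro p _
        apply Fin.ext
        show (p : ℕ) % E = (p : ℕ)
        exact Nat.mod_eq_of_lt p.isLt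
      · intro q hq
        rw [Finset.mem_coe, Finset.mem_Ico] at hq
        show q % E = q
        exact Nat.mod_eq_of_lt (lt_of_lt_of_le hq.2 hb)
    rw [key, Nat.card_Ico, hSstep i]
    omega
  -- shifting is a bijection
  have hshift : ∀ (C : Fin E → Prop) [DecidablePred C],
      (Finset.univ.filter fun p : Fin E => C (p + k)).card
        = (Finset.univ.filter C).card := by
    intro C _
    apply Finset.card_nbij' (fun p => p + k) (fun q => q - k)
    · intro p hp
      simp only [Finset.mem_coe, Finset.mem_filter, Finset.mem_univ, true_and] at hp ⊢
      exact hp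
    · intro q hq
      simp only [Finset.mem_coe, Finset.mem_filter, Finset.mem_univ, true_and] at hq ⊢
      rwa [sub_add_cancel]
    · intro p _
      exact add_sub_cancel_right p k
    · intro q _
      exact sub_add_cancel q k
  refine ⟨fun i => Finsupp.equivFunOnFinite.symm
    (fun j => (Finset.univ.filter (fun p : Fin E =>
      (S (j : ℕ) ≤ ((p + k : Fin E) : ℕ) ∧ ((p + k : Fin E) : ℕ) < S ((j : ℕ) + 1))
      ∧ (S (i : ℕ) ≤ (p : ℕ) ∧ (p : ℕ) < S ((i : ℕ) + 1)))).card), ?_, ?_, ?_⟩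
  · -- diagonal entries vanish
    intro i
    rw [Finsupp.coe_equivFunOnFinite_symm]
    rw [Finset.card_eq_zero, Finset.filter_eq_empty_iff]
    intro p _
    rintro ⟨⟨h3, h4⟩, h1, h2⟩
    have hadd : ((p + k : Fin E) : ℕ) = ((p : ℕ) + e l) % E := by
      rw [Fin.add_def]
    have hkei : e i ≤ e l := hl i
    have hstep := hSstep i
    have hpE : (p : ℕ) < E := p.isLt
    rcases Nat.lt_or_ge ((p : ℕ) + e l) E with hc | hc
    · rw [Nat.mod_eq_of_lt hc] at hadd
      omega
    · have hmod : ((p : ℕ) + e l) % E = (p : ℕ) + e l - E := by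
        rw [Nat.mod_eq_sub_mod hc, Nat.mod_eq_of_lt (by omega)]
      rw [hmod] at hadd
      omega
  · -- row sums
    intro i
    simp only [Finsupp.coe_equivFunOnFinite_symm]
    rw [sum_card_filter
      (C := fun p : Fin E => S (i : ℕ) ≤ (p : ℕ) ∧ (p : ℕ) < S ((i : ℕ) + 1))
      (Q := fun j (p : Fin E) =>
        S (j : ℕ) ≤ ((p + k : Fin E) : ℕ) ∧ ((p + k : Fin E) : ℕ) < S ((j : ℕ) + 1))
      (fun p => hblock ((p + k : Fin E) : ℕ) (p + k).isLt)]
    exact hBcard i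
  · -- column sums
    intro j
    simp only [Finsupp.coe_equivFunOnFinite_symm]
    have hcomm : ∀ i : Fin n, (Finset.univ.filter (fun p : Fin E =>
        (S (j : ℕ) ≤ ((p + k : Fin E) : ℕ) ∧ ((p + k : Fin E) : ℕ) < S ((j : ℕ) + 1))
        ∧ (S (i : ℕ) ≤ (p : ℕ) ∧ (p : ℕ) < S ((i : ℕ) + 1))))
        = (Finset.univ.filter (fun p : Fin E =>
        (S (i : ℕ) ≤ (p : ℕ) ∧ (p : ℕ) < S ((i : ℕ) + 1))
        ∧ (S (j : ℕ) ≤ ((p + k : Fin E) : ℕ) ∧ ((p + k : Fin E) : ℕ) < S ((j : ℕ) + 1)))) := by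
      intro i
      exact Finset.filter_congr fun p _ => and_comm
    rw [Finset.sum_congr rfl fun i _ => congrArg Finset.card (hcomm i)]
    rw [sum_card_filter
      (C := fun p : Fin E =>
        S (j : ℕ) ≤ ((p + k : Fin E) : ℕ) ∧ ((p + k : Fin E) : ℕ) < S ((j : ℕ) + 1))
      (Q := fun i (p : Fin E) => S (i : ℕ) ≤ (p : ℕ) ∧ (p : ℕ) < S ((i : ℕ) + 1))
      (fun p => hblock (p : ℕ) p.isLt)]
    rw [hshift (fun q : Fin E => S (j : ℕ) ≤ (q : ℕ) ∧ (q : ℕ) < S ((j : ℕ) + 1))]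
    exact hBcard j

lemma main_aux (n : ℕ) (hn : 2 ≤ n) (e : Fin n → ℕ) (he : ∀ i, 1 ≤ e i) (l : Fin n)
    (hl : ∀ i, e i ≤ e l) :
    MvPolynomial.coeff (Finsupp.equivFunOnFinite.symm e)
      (∏ i : Fin n, (∑ j ∈ Finset.univ.erase i, (X j : MvPolynomial (Fin n) ℕ)) ^ e i) = 0
      ↔ ∑ i ∈ Finset.univ.erase l, e i < e l := by
  constructor
  · -- coeff = 0 → condition  (contrapositive)
    contrapose!
    intro hcond
    haveI : Nontrivial (Fin n) := Fin.nontrivial_iff_two_le.mpr hn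
    obtain ⟨i₁, hi₁⟩ := exists_ne l
    have hne : (Finset.univ.erase l).Nonempty :=
      ⟨i₁, Finset.mem_erase.mpr ⟨hi₁, Finset.mem_univ _⟩⟩
    obtain ⟨m, hdiag, hrow, hcol⟩ := exists_rows n e he l hl hne hcond
    have hμ : (Finsupp.equivFunOnFinite.symm e : Fin n →₀ ℕ) = ∑ i, m i := by
      ext j
      rw [Finsupp.finset_sum_apply, Finsupp.coe_equivFunOnFinite_symm]
      exact (hcol j).symm
    rw [hμ]
    refine coeff_prod_ne_zero Finset.univ _ m fun i _ => ?_
    refine coeff_sum_X_pow_ne_zero (Finset.univ.erase i) (e i) (m i) (hrow i) ?_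
    intro j hj
    have hji : j = i := by
      by_contra hc
      exact hj (Finset.mem_erase.mpr ⟨hc, Finset.mem_univ _⟩)
    rw [hji]
    exact hdiag i
  · -- condition → coeff = 0
    intro hcond
    by_contra h0
    have hmem : (Finsupp.equivFunOnFinite.symm e : Fin n →₀ ℕ) ∈
        (∏ i : Fin n,
          (∑ j ∈ Finset.univ.erase i, (X j : MvPolynomial (Fin n) ℕ)) ^ e i).support :=
      mem_support_iff.mpr h0
    have hle : e l ≤ degreeOf l (∏ i : Fin n,
        (∑ j ∈ Finset.univ.erase i, (X j : MvPolynomial (Fin n) ℕ)) ^ e i) := by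
      rw [degreeOf_eq_sup]
      have := Finset.le_sup (f := fun m : Fin n →₀ ℕ => m l) hmem
      simpa using this
    have hub : degreeOf l (∏ i : Fin n,
        (∑ j ∈ Finset.univ.erase i, (X j : MvPolynomial (Fin n) ℕ)) ^ e i)
        ≤ ∑ i ∈ Finset.univ.erase l, e i := by
      calc degreeOf l (∏ i : Fin n,
            (∑ j ∈ Finset.univ.erase i, (X j : MvPolynomial (Fin n) ℕ)) ^ e i)
          ≤ ∑ i : Fin n,
            degreeOf l ((∑ j ∈ Finset.univ.erase i, (X j : MvPolynomial (Fin n) ℕ)) ^ e i) :=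
          degreeOf_prod_le l Finset.univ _
        _ ≤ ∑ i : Fin n, (if i = l then 0 else e i) := by
          refine Finset.sum_le_sum fun i _ => ?_
          rcases eq_or_ne i l with rfl | hne2
          · rw [if_pos rfl]
            have h1 : degreeOf i
                (∑ j ∈ Finset.univ.erase i, (X j : MvPolynomial (Fin n) ℕ)) ≤ 0 :=
              le_trans (degreeOf_sum_le _ _ _) (Finset.sup_le fun j hj => by
                rw [degreeOf_X, if_neg ((Finset.mem_erase.mp hj).1.symm)])
            calc degreeOf i
                  ((∑ j ∈ Finset.univ.erase i, (X j : MvPolynomial (Fin n) ℕ)) ^ e i)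
                ≤ e i * degreeOf i
                  (∑ j ∈ Finset.univ.erase i, (X j : MvPolynomial (Fin n) ℕ)) :=
                degreeOf_pow_le _ _ _
              _ ≤ e i * 0 := Nat.mul_le_mul_left _ h1
              _ = 0 := by ring
          · rw [if_neg hne2]
            have h1 : degreeOf l
                (∑ j ∈ Finset.univ.erase i, (X j : MvPolynomial (Fin n) ℕ)) ≤ 1 :=
              le_trans (degreeOf_sum_le _ _ _) (Finset.sup_le fun j hj => by
                rw [degreeOf_X]
                split <;> omega)
            calc degreeOf l
                  ((∑ j ∈ Finset.univ.erase i, (X j : MvPolynomial (Fin n) ℕ)) ^ e i)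
                ≤ e i * degreeOf l
                  (∑ j ∈ Finset.univ.erase i, (X j : MvPolynomial (Fin n) ℕ)) :=
                degreeOf_pow_le _ _ _
              _ ≤ e i * 1 := Nat.mul_le_mul_left _ h1
              _ = e i := mul_one _
        _ = ∑ i ∈ Finset.univ.erase l, e i := by
          rw [← Finset.add_sum_erase _ _ (Finset.mem_univ l), if_pos rfl, zero_add]
          exact Finset.sum_congr rfl fun i hi => if_neg (Finset.mem_erase.mp hi).1
    omega

end CCoeffAux

/-- for `2 ≤ d₁ ≤ ⋯ ≤ dₙ`, `c(d) = 0` iff `dₙ - 1 > ∑_{i=1}^{n-1} (dᵢ - 1)`. -/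
theorem cCoeff_eq_zero_iff (n : ℕ) (hn : 2 ≤ n) (d : Fin n → ℕ)
    (hd : ∀ i, 2 ≤ d i) (hmono : Monotone d) :
    cCoeff d = 0 ↔
      ∑ i ∈ Finset.univ.erase (⟨n - 1, by omega⟩ : Fin n), (d i - 1) <
        d ⟨n - 1, by omega⟩ - 1 := by
  have hM : MvPolynomial.map (Nat.castRingHom ℤ)
      (∏ i : Fin n, (∑ j ∈ Finset.univ.erase i, (X j : MvPolynomial (Fin n) ℕ)) ^ (d i - 1))
      = ∏ i : Fin n,
        (∑ j ∈ Finset.univ.erase i, (X j : MvPolynomial (Fin n) ℤ)) ^ (d i - 1) := by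
    rw [map_prod]
    refine Finset.prod_congr rfl fun i _ => ?_
    rw [map_pow, map_sum]
    simp [MvPolynomial.map_X]
  have hmap : cCoeff d = ((MvPolynomial.coeff (Finsupp.equivFunOnFinite.symm fun i => d i - 1)
      (∏ i : Fin n, (∑ j ∈ Finset.univ.erase i, (X j : MvPolynomial (Fin n) ℕ)) ^ (d i - 1))
        : ℕ) : ℤ) := by
    rw [cCoeff, ← hM, coeff_map]
    rfl
  rw [hmap, Int.natCast_eq_zero]
  have he : ∀ i, 1 ≤ d i - 1 := fun i => by have := hd i; omega
  have hl : ∀ i : Fin n, d i - 1 ≤ d (⟨n - 1, by omega⟩ : Fin n) - 1 := by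
    intro i
    refine Nat.sub_le_sub_right (hmono ?_) 1
    rw [Fin.le_def]
    exact Nat.le_pred_of_lt i.isLt
  exact CCoeffAux.main_aux n hn (fun i => d i - 1) he ⟨n - 1, by omega⟩ hl
end

section
/- Fix n ≥ 1 and work in the ring ℤ[[x_1, …, x_n]] of multivariate formal power series. Let D = ∑_{i=0}^{n} (1 − i)·e_i(x_1, …, x_n), where e_i denotes the i-th elementary symmetric polynomial in x_1, …, x_n; D has constant coefficient 1 and is therefore invertible. Then for every tuple d = (d_1, …, d_n) of integers with each d_i ≥ 2, the coefficient of x_1^{d_1} ⋯ x_n^{d_n} in the power series x_1 ⋯ x_n · D^{−1} equals c(d). -/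
/-- The denominator `D = ∑_{i=0}^n (1 - i) eᵢ(x)` of the generating function, as a
multivariate formal power series over `ℤ`. -/
noncomputable def genDenom (n : ℕ) : MvPowerSeries (Fin n) ℤ :=
  ∑ i ∈ Finset.range (n + 1),
    ((1 : ℤ) - (i : ℤ)) •
      ((MvPolynomial.esymm (Fin n) ℤ i : MvPolynomial (Fin n) ℤ) : MvPowerSeries (Fin n) ℤ)



open Finset

lemma card_smul_sum_powerset {ι R : Type*} [DecidableEq ι] [CommRing R]
    (U : Finset ι) (a b : ι → R) :
    ∑ S ∈ U.powerset, (S.card : ℤ) • ((∏ i ∈ S, a i) * ∏ i ∈ U \ S, b i)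
      = ∑ j ∈ U, a j * ∏ i ∈ U.erase j, (a i + b i) := by
  have h1 : ∀ S ∈ U.powerset, (S.card : ℤ) • ((∏ i ∈ S, a i) * ∏ i ∈ U \ S, b i)
      = ∑ j ∈ U, (if j ∈ S then (∏ i ∈ S, a i) * ∏ i ∈ U \ S, b i else 0) := by
    intro S hS
    rw [Finset.sum_ite_mem]
    rw [Finset.inter_eq_right.mpr (Finset.mem_powerset.mp hS)]
    rw [Finset.sum_const, natCast_zsmul]
  rw [Finset.sum_congr rfl h1, Finset.sum_comm]
  refine Finset.sum_congr rfl fun j hj => ?_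
  have hje : j ∉ U.erase j := Finset.notMem_erase j U
  have hU : U = insert j (U.erase j) := (Finset.insert_erase hj).symm
  rw [hU, Finset.sum_powerset_insert hje]
  have h0 : ∀ t ∈ (U.erase j).powerset,
      (if j ∈ t then (∏ i ∈ t, a i) * ∏ i ∈ insert j (U.erase j) \ t, b i else 0) = 0 := by
    intro t ht
    rw [if_neg fun hjt => hje (Finset.mem_powerset.mp ht hjt)]
  rw [Finset.sum_congr rfl h0, Finset.sum_const, smul_zero, zero_add]
  have h2 : ∀ t ∈ (U.erase j).powerset,
      (if j ∈ insert j t then (∏ i ∈ insert j t, a i) * ∏ i ∈ insert j (U.erase j) \ insert j t, b i else 0)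
        = a j * ((∏ i ∈ t, a i) * ∏ i ∈ U.erase j \ t, b i) := by
    intro t ht
    have hjt : j ∉ t := fun hjt => hje (Finset.mem_powerset.mp ht hjt)
    rw [if_pos (Finset.mem_insert_self _ _), Finset.prod_insert hjt]
    have : insert j (U.erase j) \ insert j t = U.erase j \ t := by
      ext x
      simp only [Finset.mem_sdiff, Finset.mem_insert]
      constructor
      · rintro ⟨hx1 | hx1, hx2⟩
        · exact (hx2 (Or.inl hx1)).elim
        · exact ⟨hx1, fun hxt => hx2 (Or.inr hxt)⟩
      · rintro ⟨hx1, hx2⟩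
        exact ⟨Or.inr hx1, by rintro (rfl | hxt); exact (Finset.notMem_erase _ _) hx1; exact hx2 hxt⟩
    rw [this, mul_assoc]
  rw [Finset.sum_congr rfl h2, ← Finset.mul_sum, ← Finset.prod_add, Finset.erase_insert hje]

lemma one_sub_card_sum_powerset {ι R : Type*} [DecidableEq ι] [CommRing R]
    (U : Finset ι) (a b : ι → R) :
    ∑ S ∈ U.powerset, ((1 : ℤ) - S.card) • ((∏ i ∈ S, a i) * ∏ i ∈ U \ S, b i)
      = ∏ i ∈ U, (a i + b i) - ∑ j ∈ U, a j * ∏ i ∈ U.erase j, (a i + b i) := by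
  simp_rw [sub_smul, one_smul, Finset.sum_sub_distrib]
  rw [card_smul_sum_powerset, ← Finset.prod_add]

open MvPolynomial

variable {n : ℕ}

noncomputable def sigP (n : ℕ) (i : Fin n) : MvPolynomial (Fin n) ℤ :=
  ∑ j ∈ Finset.univ.erase i, X j

noncomputable def cE (e : Fin n →₀ ℕ) : ℤ :=
  MvPolynomial.coeff e (∏ i : Fin n, sigP n i ^ e i)

noncomputable def indF (S : Finset (Fin n)) : Fin n →₀ ℕ := ∑ i ∈ S, Finsupp.single i 1

lemma indF_apply (S : Finset (Fin n)) (j : Fin n) :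
    indF S j = if j ∈ S then 1 else 0 := by
  classical
  rw [indF, Finset.sum_apply']
  simp [Finsupp.single_apply]

lemma indF_le_iff (S : Finset (Fin n)) (e : Fin n →₀ ℕ) :
    indF S ≤ e ↔ S ⊆ e.support := by
  rw [Finsupp.le_def]
  constructor
  · intro h j hj
    have := h j
    rw [indF_apply, if_pos hj] at this
    exact Finsupp.mem_support_iff.mpr (by omega)
  · intro h j
    rw [indF_apply]
    split_ifs with hj
    · exact Nat.one_le_iff_ne_zero.mpr (Finsupp.mem_support_iff.mp (h hj))
    · exact Nat.zero_le _

lemma sub_indF_apply (e : Fin n →₀ ℕ) (S : Finset (Fin n)) (j : Fin n) :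
    (e - indF S) j = e j - (if j ∈ S then 1 else 0) := by
  rw [Finsupp.tsub_apply, indF_apply]

lemma cE_zero : cE (0 : Fin n →₀ ℕ) = 1 := by
  simp [cE]

lemma crux (e : Fin n →₀ ℕ) :
    ∑ S ∈ e.support.powerset, ((1 : ℤ) - S.card) * cE (e - indF S)
      = if e = 0 then 1 else 0 := by
  classical
  by_cases he : e = 0
  · subst he
    rw [if_pos rfl]
    simp [indF, cE_zero]
  · rw [if_neg he]
    set U := e.support with hUdef
    have hU : U.Nonempty := Finsupp.support_nonempty_iff.mpr he
    set T : MvPolynomial (Fin n) ℤ := ∑ j : Fin n, X j with hT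
    -- Step A
    set Q : Finset (Fin n) → MvPolynomial (Fin n) ℤ :=
      fun S => ∏ i : Fin n, sigP n i ^ (e i - if i ∈ S then 1 else 0) with hQ
    have stepA : ∀ S ∈ U.powerset,
        ((1 : ℤ) - S.card) * cE (e - indF S)
          = MvPolynomial.coeff e (((1 : ℤ) - S.card) • (monomial (indF S) (1 : ℤ) * Q S)) := by
      intro S hS
      rw [coeff_smul, smul_eq_mul]
      congr 1
      rw [coeff_monomial_mul', if_pos ((indF_le_iff S e).mpr (Finset.mem_powerset.mp hS)), one_mul]
      rw [cE]
      congr 1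
      refine Finset.prod_congr rfl fun i _ => ?_
      rw [sub_indF_apply]
    rw [Finset.sum_congr rfl stepA, ← coeff_sum]
    -- Step B : rewrite the polynomial sum in closed form
    have hab : ∀ S ∈ U.powerset, monomial (indF S) (1 : ℤ) * Q S
        = (∏ i ∈ S, (X i * sigP n i ^ (e i - 1))) * ∏ i ∈ U \ S, sigP n i ^ e i := by
      intro S hS
      have hSU : S ⊆ U := Finset.mem_powerset.mp hS
      have hmon : monomial (indF S) (1 : ℤ) = ∏ i ∈ S, X i := by
        rw [indF, monomial_sum_one]
        exact Finset.prod_congr rfl fun i _ => rfl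
      have hQS : Q S = (∏ i ∈ U \ S, sigP n i ^ e i) * ∏ i ∈ S, sigP n i ^ (e i - 1) := by
        rw [hQ]
        have hsub : Q S = ∏ i ∈ U, sigP n i ^ (e i - if i ∈ S then 1 else 0) := by
          rw [hQ]
          refine (Finset.prod_subset (Finset.subset_univ U) fun i _ hiU => ?_).symm
          have h0 : e i = 0 := Finsupp.notMem_support_iff.mp hiU
          have hiS : i ∉ S := fun h => hiU (hSU h)
          rw [if_neg hiS, h0, pow_zero]
        rw [← hQ, hsub, ← Finset.prod_sdiff hSU]
        congr 1
        · exact Finset.prod_congr rfl fun i hi =>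
            by rw [if_neg (Finset.mem_sdiff.mp hi).2, Nat.sub_zero]
        · exact Finset.prod_congr rfl fun i hi => by rw [if_pos hi]
      rw [hmon, hQS, Finset.prod_mul_distrib]
      ring
    have stepB : ∑ S ∈ U.powerset, ((1 : ℤ) - S.card) • (monomial (indF S) (1 : ℤ) * Q S)
        = (∏ i ∈ U, sigP n i ^ (e i - 1)) * T ^ (U.card - 1) * ∑ j ∈ Finset.univ \ U, X j := by
      rw [Finset.sum_congr rfl fun S hS => by rw [hab S hS]]
      rw [one_sub_card_sum_powerset U (fun i => X i * sigP n i ^ (e i - 1))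
        (fun i => sigP n i ^ e i)]
      have habi : ∀ i ∈ U, X i * sigP n i ^ (e i - 1) + sigP n i ^ e i
          = sigP n i ^ (e i - 1) * T := by
        intro i hi
        have hei : 1 ≤ e i := Nat.one_le_iff_ne_zero.mpr (Finsupp.mem_support_iff.mp hi)
        have : sigP n i ^ e i = sigP n i ^ (e i - 1) * sigP n i := by
          conv_lhs => rw [show e i = (e i - 1) + 1 by omega]
          rw [pow_succ]
        rw [this, mul_comm (X i), ← mul_add]
        congr 1
        rw [hT, sigP, Finset.add_sum_erase _ _ (Finset.mem_univ i)]
      have h1 : ∏ i ∈ U, (X i * sigP n i ^ (e i - 1) + sigP n i ^ e i)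
          = (∏ i ∈ U, sigP n i ^ (e i - 1)) * T ^ U.card := by
        rw [Finset.prod_congr rfl habi, Finset.prod_mul_distrib, Finset.prod_const]
      have h2 : ∀ j ∈ U, X j * sigP n j ^ (e j - 1)
            * ∏ i ∈ U.erase j, (X i * sigP n i ^ (e i - 1) + sigP n i ^ e i)
          = X j * ((∏ i ∈ U, sigP n i ^ (e i - 1)) * T ^ (U.card - 1)) := by
        intro j hj
        have : ∏ i ∈ U.erase j, (X i * sigP n i ^ (e i - 1) + sigP n i ^ e i)
            = (∏ i ∈ U.erase j, sigP n i ^ (e i - 1)) * T ^ (U.card - 1) := by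
          rw [Finset.prod_congr rfl fun i hi => habi i (Finset.mem_of_mem_erase hi),
            Finset.prod_mul_distrib, Finset.prod_const, Finset.card_erase_of_mem hj]
        rw [this, ← Finset.mul_prod_erase U (fun i => sigP n i ^ (e i - 1)) hj]
        ring
      rw [h1, Finset.sum_congr rfl h2, ← Finset.sum_mul]
      have hsd : ∑ j ∈ Finset.univ \ U, X j = T - ∑ j ∈ U, (X j : MvPolynomial (Fin n) ℤ) := by
        rw [hT, eq_sub_iff_add_eq, Finset.sum_sdiff (Finset.subset_univ U)]
      have hpow : T ^ U.card = T ^ (U.card - 1) * T := by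
        rw [← pow_succ]
        congr 1
        have := hU.card_pos
        omega
      rw [hsd, hpow]
      ring
    rw [stepB]
    -- Step C
    rw [Finset.mul_sum, coeff_sum]
    refine Finset.sum_eq_zero fun j hj => ?_
    have hjU : j ∉ U := (Finset.mem_sdiff.mp hj).2
    rw [coeff_mul_X', if_neg (by rwa [hUdef] at hjU)]

noncomputable def Gs (n : ℕ) : MvPowerSeries (Fin n) ℤ := fun e => cE e

lemma coeff_Gs (e : Fin n →₀ ℕ) : MvPowerSeries.coeff e (Gs n) = cE e := rfl

lemma coe_esymm_eq (k : ℕ) :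
    ((esymm (Fin n) ℤ k : MvPolynomial (Fin n) ℤ) : MvPowerSeries (Fin n) ℤ)
      = ∑ S ∈ Finset.powersetCard k Finset.univ, MvPowerSeries.monomial (indF S) 1 := by
  rw [← coeToMvPowerSeries.ringHom_apply, esymm_eq_sum_monomial, map_sum]
  refine Finset.sum_congr rfl fun S _ => ?_
  rw [coeToMvPowerSeries.ringHom_apply, coe_monomial]
  rfl

lemma DG_eq_one : genDenom n * Gs n = 1 := by
  classical
  ext e
  rw [MvPowerSeries.coeff_one, genDenom, Finset.sum_mul]
  simp_rw [smul_mul_assoc]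
  rw [map_sum]
  have hes : ∀ k, MvPowerSeries.coeff e
      (((esymm (Fin n) ℤ k : MvPolynomial (Fin n) ℤ) : MvPowerSeries (Fin n) ℤ) * Gs n)
        = ∑ S ∈ Finset.powersetCard k Finset.univ,
            (if indF S ≤ e then cE (e - indF S) else 0) := by
    intro k
    rw [coe_esymm_eq, Finset.sum_mul, map_sum]
    refine Finset.sum_congr rfl fun S _ => ?_
    rw [MvPowerSeries.coeff_monomial_mul]
    split_ifs with h
    · rw [one_mul, coeff_Gs]
    · rfl
  have hsum : ∑ k ∈ Finset.range (n + 1), MvPowerSeries.coeff e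
      (((1 : ℤ) - k) • (((esymm (Fin n) ℤ k : MvPolynomial (Fin n) ℤ) : MvPowerSeries (Fin n) ℤ) * Gs n))
      = ∑ S ∈ (Finset.univ : Finset (Fin n)).powerset,
          ((1 : ℤ) - S.card) * (if indF S ≤ e then cE (e - indF S) else 0) := by
    rw [Finset.sum_powerset]
    rw [Finset.card_univ, Fintype.card_fin]
    refine Finset.sum_congr rfl fun k _ => ?_
    rw [map_smul, smul_eq_mul, hes k, Finset.mul_sum]
    refine Finset.sum_congr rfl fun S hS => ?_
    rw [(Finset.mem_powersetCard.mp hS).2]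
  rw [hsum]
  have hrestrict : ∑ S ∈ (Finset.univ : Finset (Fin n)).powerset,
      ((1 : ℤ) - S.card) * (if indF S ≤ e then cE (e - indF S) else 0)
      = ∑ S ∈ e.support.powerset, ((1 : ℤ) - S.card) * cE (e - indF S) := by
    rw [← Finset.sum_subset (Finset.powerset_mono.mpr (Finset.subset_univ e.support))]
    · refine Finset.sum_congr rfl fun S hS => ?_
      rw [if_pos ((indF_le_iff S e).mpr (Finset.mem_powerset.mp hS))]
    · intro S _ hS
      rw [if_neg, mul_zero]
      rw [indF_le_iff]
      exact fun h => hS (Finset.mem_powerset.mpr h)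
  rw [hrestrict, crux]


/-- `D` has constant coefficient `1`, hence is invertible, and the coefficient
of `x₁^{d₁} ⋯ xₙ^{dₙ}` in `x₁ ⋯ xₙ · D⁻¹` equals `c(d)` for every `d` with all `dᵢ ≥ 2`. -/
theorem generating_function_cCoeff (n : ℕ) (hn : 1 ≤ n) :
    MvPowerSeries.constantCoeff (genDenom n) = 1 ∧
    (∃ g : MvPowerSeries (Fin n) ℤ, genDenom n * g = 1) ∧
    ∀ (d : Fin n → ℕ), (∀ i, 2 ≤ d i) →
      ∀ g : MvPowerSeries (Fin n) ℤ, genDenom n * g = 1 →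
        MvPowerSeries.coeff (Finsupp.equivFunOnFinite.symm d)
          ((∏ i : Fin n, MvPowerSeries.X i) * g) = cCoeff d := by
  have hGs1 : MvPowerSeries.constantCoeff (Gs n) = 1 := by
    rw [← MvPowerSeries.coeff_zero_eq_constantCoeff_apply, coeff_Gs, cE_zero]
  refine ⟨?_, ⟨Gs n, DG_eq_one⟩, ?_⟩
  · have h1 : MvPowerSeries.constantCoeff (genDenom n)
        * MvPowerSeries.constantCoeff (Gs n) = 1 := by
      rw [← map_mul, DG_eq_one, map_one]
    rwa [hGs1, mul_one] at h1
  · intro d hd g hg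
    have hgG : g = Gs n := by
      have h2 : Gs n * (genDenom n * g) = Gs n := by rw [hg, mul_one]
      rw [← mul_assoc, mul_comm (Gs n) (genDenom n), DG_eq_one, one_mul] at h2
      exact h2
    have hprod : (∏ i : Fin n, (MvPowerSeries.X i : MvPowerSeries (Fin n) ℤ))
        = MvPowerSeries.monomial (indF (Finset.univ : Finset (Fin n))) 1 := by
      rw [show (indF (Finset.univ : Finset (Fin n))) = ∑ i ∈ Finset.univ, Finsupp.single i 1
        from rfl]
      rw [← MvPolynomial.coe_monomial, monomial_sum_one, ← coeToMvPowerSeries.ringHom_apply,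
        map_prod]
      refine Finset.prod_congr rfl fun i _ => ?_
      rw [coeToMvPowerSeries.ringHom_apply, coe_monomial, MvPowerSeries.X_def]
    set sd := Finsupp.equivFunOnFinite.symm d with hsd
    have hsdi : ∀ i, sd i = d i := fun i => rfl
    have hle : indF (Finset.univ : Finset (Fin n)) ≤ sd := by
      rw [indF_le_iff]
      intro i _
      rw [Finsupp.mem_support_iff, hsdi]
      have := hd i
      omega
    rw [hgG, hprod, MvPowerSeries.coeff_monomial_mul, if_pos hle, one_mul, coeff_Gs]
    have hsub : sd - indF (Finset.univ : Finset (Fin n))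
        = Finsupp.equivFunOnFinite.symm (fun i => d i - 1) := by
      ext i
      rw [Finsupp.tsub_apply, indF_apply, if_pos (Finset.mem_univ i), hsdi,
        Finsupp.equivFunOnFinite_symm_apply_apply]
    rw [cE, hsub, cCoeff]
    congr 1
end

section
/- For every integer n ≥ 2, the number c(2, 2, …, 2) (with n entries equal to 2) equals the number of derangements of an n-element set, i.e., the number of permutations of {1, …, n} with no fixed point. -/
open MvPolynomial Finset


/-- `c(2, …, 2)` (with `n` entries) is the number of derangements of an
`n`-element set, i.e. the number of fixed-point-free permutations of `{1, …, n}`. -/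
theorem cCoeff_two_eq_derangements (n : ℕ) (hn : 2 ≤ n) :
    cCoeff (fun _ : Fin n => 2) =
      Fintype.card {f : Equiv.Perm (Fin n) // ∀ x, f x ≠ x} := by
  classical
  have key : ∀ g : Fin n → Fin n,
      ((∑ i, Finsupp.single (g i) 1 : Fin n →₀ ℕ) =
        (Finsupp.equivFunOnFinite.symm fun _ : Fin n => 1)) ↔ Function.Bijective g := by
    intro g
    constructor
    · intro h
      rw [Fintype.bijective_iff_surjective_and_card]
      refine ⟨fun j => ?_, rfl⟩
      have hj := DFunLike.congr_fun h j
      by_contra hx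
      push_neg at hx
      simp [Finsupp.single_apply, (hx · |>.symm)] at hj
    · intro hg
      ext j
      obtain ⟨i0, hi0⟩ := hg.surjective j
      have hiff : ∀ i, g i = j ↔ i = i0 :=
        fun i => ⟨fun h => hg.injective (h.trans hi0.symm), fun h => h ▸ hi0⟩
      simp [Finsupp.single_apply, hiff]
  unfold cCoeff
  simp only [show (2:ℕ)-1 = 1 from rfl, pow_one]
  rw [Finset.prod_univ_sum (fun i : Fin n => Finset.univ.erase i) (fun i j => (X j : MvPolynomial (Fin n) ℤ))]
  rw [MvPolynomial.coeff_sum]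
  have hmon : ∀ g : Fin n → Fin n, (∏ i, (X (g i) : MvPolynomial (Fin n) ℤ)) =
      monomial (∑ i, Finsupp.single (g i) 1) 1 := by
    intro g
    rw [monomial_sum_one]
    simp [X]
  simp only [hmon, coeff_monomial, key]
  rw [Finset.sum_boole]
  have e : {f : Equiv.Perm (Fin n) // ∀ x, f x ≠ x} ≃
      {g // g ∈ (Fintype.piFinset fun i : Fin n => Finset.univ.erase i).filter
        Function.Bijective} :=
    { toFun := fun σ => ⟨⇑σ.1, by
        simp only [Finset.mem_filter, Fintype.mem_piFinset, Finset.mem_erase]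
        exact ⟨fun i => ⟨σ.2 i, Finset.mem_univ _⟩, σ.1.bijective⟩⟩
      invFun := fun g => ⟨Equiv.ofBijective g.1
          (Finset.mem_filter.mp g.2).2, fun x => by
        have h := (Finset.mem_filter.mp g.2).1
        rw [Fintype.mem_piFinset] at h
        exact (Finset.mem_erase.mp (h x)).1⟩
      left_inv := fun σ => Subtype.ext (Equiv.ext fun x => rfl)
      right_inv := fun g => rfl }
  congr 1
  rw [← Fintype.card_coe]
  exact (Fintype.card_congr e).symm
end

section
/- For every tuple d = (d_1, …, d_n) of positive integers, c(d) equals the number of block derangements of F. -/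
open Finset MvPolynomial

lemma choose_eq_of {β : Type*} [Fintype β] {p : β → Prop} [DecidablePred p]
    (hp : ∃! k, p k) {k : β} (hk : p k) : Fintype.choose p hp = k :=
  hp.unique (Fintype.choose_spec p hp) hk

lemma prod_X_eq_monomial' {n : ℕ} {α : Type*} (s : Finset α) (g : α → Fin n) :
    ∏ x ∈ s, (X (g x) : MvPolynomial (Fin n) ℤ) =
      monomial (∑ x ∈ s, Finsupp.single (g x) 1) 1 := by
  induction s using Finset.cons_induction with
  | empty => simp
  | cons a s ha ih =>
      rw [Finset.prod_cons, ih, Finset.sum_cons, X, monomial_mul, one_mul]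

lemma cCoeff_eq_card_fun (n : ℕ) (d : Fin n → ℕ) :
    cCoeff d = ((Finset.univ.filter (fun g : (Σ i : Fin n, Fin (d i - 1)) → Fin n =>
      (∀ x, g x ≠ x.1) ∧
        ∀ k, (Finset.univ.filter (fun x => g x = k)).card = d k - 1)).card : ℤ) := by
  classical
  have h1 : (∏ i : Fin n,
      (∑ j ∈ Finset.univ.erase i, (X j : MvPolynomial (Fin n) ℤ)) ^ (d i - 1)) =
      ∏ x : Σ i : Fin n, Fin (d i - 1),
        ∑ j ∈ Finset.univ.erase x.1, (X j : MvPolynomial (Fin n) ℤ) := by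
    rw [← Finset.univ_sigma_univ, Finset.prod_sigma]
    simp
  have h2 : (∏ x : Σ i : Fin n, Fin (d i - 1),
        ∑ j ∈ Finset.univ.erase x.1, (X j : MvPolynomial (Fin n) ℤ)) =
      ∑ g ∈ Fintype.piFinset (fun x : Σ i : Fin n, Fin (d i - 1) => Finset.univ.erase x.1),
        ∏ x : Σ i : Fin n, Fin (d i - 1), (X (g x) : MvPolynomial (Fin n) ℤ) :=
    Finset.prod_univ_sum _ _
  have hcond : ∀ g : (Σ i : Fin n, Fin (d i - 1)) → Fin n,
      ((∑ x : Σ i : Fin n, Fin (d i - 1), Finsupp.single (g x) 1) =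
        (Finsupp.equivFunOnFinite.symm fun i => d i - 1 : (Fin n) →₀ ℕ)) ↔
      ∀ k, (Finset.univ.filter (fun x => g x = k)).card = d k - 1 := by
    intro g
    rw [Finsupp.ext_iff]
    apply forall_congr'
    intro k
    rw [Finset.sum_apply', Finset.card_filter]
    simp [Finsupp.single_apply]
  unfold cCoeff
  rw [h1, h2, MvPolynomial.coeff_sum]
  simp only [prod_X_eq_monomial', MvPolynomial.coeff_monomial]
  rw [Finset.sum_boole]
  congr 1
  congr 1
  ext g
  simp only [Finset.mem_filter, Fintype.mem_piFinset, Finset.mem_erase, Finset.mem_univ,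
    and_true, true_and]
  rw [hcond g]

/-- `c(d)` equals the number of block derangements of
`F = ⋃ᵢ Fᵢ`, where `Fᵢ = {(i, j) : 1 ≤ j ≤ dᵢ - 1}` (here modelled as the sigma type
`Σ i, Fin (dᵢ - 1)`): ordered tuples `(A₁, …, Aₙ)` of pairwise disjoint subsets of `F`
covering `F` with `|Aₖ| = dₖ - 1` and `Fₖ ∩ Aₖ = ∅` for every `k`. -/
theorem cCoeff_eq_card_blockDerangements (n : ℕ) (d : Fin n → ℕ) (hd : ∀ i, 0 < d i) :
    cCoeff d =
      (Nat.card {A : Fin n → Finset (Σ i : Fin n, Fin (d i - 1)) //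
        (∀ k l, k ≠ l → Disjoint (A k) (A l)) ∧
        (∀ x : Σ i : Fin n, Fin (d i - 1), ∃ k, x ∈ A k) ∧
        (∀ k, (A k).card = d k - 1) ∧
        (∀ k, ∀ x ∈ A k, Sigma.fst x ≠ k)} : ℤ) := by
  classical
  rw [cCoeff_eq_card_fun]
  congr 1
  have huniq : ∀ (A : {A : Fin n → Finset (Σ i : Fin n, Fin (d i - 1)) //
        (∀ k l, k ≠ l → Disjoint (A k) (A l)) ∧
        (∀ x : Σ i : Fin n, Fin (d i - 1), ∃ k, x ∈ A k) ∧
        (∀ k, (A k).card = d k - 1) ∧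
        (∀ k, ∀ x ∈ A k, Sigma.fst x ≠ k)})
      (x : Σ i : Fin n, Fin (d i - 1)), ∃! k, x ∈ A.1 k := by
    rintro ⟨A, hdisj, hcov, hcard, hne⟩ x
    obtain ⟨k, hk⟩ := hcov x
    exact ⟨k, hk, fun l hl => by
      by_contra h
      exact Finset.disjoint_left.1 (hdisj l k h) hl hk⟩
  have e : {g : (Σ i : Fin n, Fin (d i - 1)) → Fin n //
      (∀ x, g x ≠ x.1) ∧
        ∀ k, (Finset.univ.filter (fun x => g x = k)).card = d k - 1} ≃
      {A : Fin n → Finset (Σ i : Fin n, Fin (d i - 1)) //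
        (∀ k l, k ≠ l → Disjoint (A k) (A l)) ∧
        (∀ x : Σ i : Fin n, Fin (d i - 1), ∃ k, x ∈ A k) ∧
        (∀ k, (A k).card = d k - 1) ∧
        (∀ k, ∀ x ∈ A k, Sigma.fst x ≠ k)} :=
  { toFun := fun g => ⟨fun k => Finset.univ.filter (fun x => g.1 x = k), by
      refine ⟨?_, ?_, ?_, ?_⟩
      · intro k l hkl
        rw [Finset.disjoint_left]
        intro x hx hx'
        simp only [Finset.mem_filter] at hx hx'
        exact hkl (hx.2 ▸ hx'.2)
      · intro x; exact ⟨g.1 x, by simp⟩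
      · exact g.2.2
      · intro k x hx
        simp only [Finset.mem_filter] at hx
        exact fun h => g.2.1 x (hx.2.trans h.symm)⟩
    invFun := fun A => ⟨fun x => Fintype.choose _ (huniq A x), by
      constructor
      · intro x
        have := Fintype.choose_spec (fun k => x ∈ A.1 k) (huniq A x)
        exact fun h => A.2.2.2.2 _ x this h.symm
      · intro k
        have : Finset.univ.filter
            (fun x => Fintype.choose (fun k => x ∈ A.1 k) (huniq A x) = k) = A.1 k := by
          ext x
          simp only [Finset.mem_filter, Finset.mem_univ, true_and]
          constructor
          · rintro rfl
            exact Fintype.choose_spec (fun k => x ∈ A.1 k) (huniq A x)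
          · intro hx
            exact choose_eq_of (huniq A x) hx
        rw [this]
        exact A.2.2.2.1 k⟩
    left_inv := by
      rintro ⟨g, hg⟩
      apply Subtype.ext
      funext x
      exact choose_eq_of (huniq _ x) (by simp)
    right_inv := by
      rintro ⟨A, hA⟩
      apply Subtype.ext
      funext k
      ext x
      simp only [Finset.mem_filter, Finset.mem_univ, true_and]
      constructor
      · rintro rfl
        exact Fintype.choose_spec (fun k => x ∈ A k) (huniq ⟨A, hA⟩ x)
      · intro hx
        exact choose_eq_of (huniq ⟨A, hA⟩ x) hx }
  rw [← Nat.card_congr e, Nat.card_eq_fintype_card, Fintype.card_subtype]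
end

section
/- Let d ≥ 2 and let X = (X^{(1)}, X^{(2)}) be a two-player game of format (d, d) over ℂ, with payoff matrices X^{(1)} = (x^{(1)}_{jk}) and X^{(2)} = (x^{(2)}_{jk}) in ℂ^{d×d}. Let A be the (d−1)×d matrix with entries A_{k,j} = x^{(1)}_{1,j} − x^{(1)}_{k+1,j} (1 ≤ k ≤ d−1, 1 ≤ j ≤ d) and let B be the (d−1)×d matrix with entries B_{k,i} = x^{(2)}_{i,1} − x^{(2)}_{i,k+1}. Then the Nash equilibrium set of X is infinite if and only if rank A ≤ d − 2 or rank B ≤ d − 2; moreover, if rank A = rank B = d − 1 then the Nash equilibrium set consists of exactly one point. -/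
open Matrix Module

private lemma projSet_subsingleton {d : ℕ} (W : Submodule ℂ (Fin d → ℂ))
    (h : Module.finrank ℂ W ≤ 1) :
    Set.Subsingleton {x : Projectivization ℂ (Fin d → ℂ) |
      ∃ v, ∃ hv : v ≠ 0, x = Projectivization.mk ℂ v hv ∧ v ∈ W} := by
  rintro x ⟨v, hv, rfl, hvW⟩ y ⟨w, hw, rfl, hwW⟩
  rw [Projectivization.mk_eq_mk_iff']
  have hLI : ¬ LinearIndependent ℂ ![(⟨v, hvW⟩ : W), ⟨w, hwW⟩] := by
    intro hli
    have := hli.fintype_card_le_finrank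
    simp at this
    omega
  rw [LinearIndependent.pair_iff] at hLI
  push_neg at hLI
  obtain ⟨s, t, hst, hne⟩ := hLI
  have hst' : s • v + t • w = 0 := by simpa using congrArg Subtype.val hst
  rcases eq_or_ne s 0 with rfl | hs
  · simp only [zero_smul, zero_add, smul_eq_zero] at hst'
    rcases hst' with ht | rfl
    · exact absurd ht (hne rfl)
    · exact absurd rfl hw
  · refine ⟨-t / s, ?_⟩
    have h1 : s • v = (-t) • w := by
      rw [neg_smul, eq_neg_iff_add_eq_zero]; exact hst'
    calc (-t / s) • w = s⁻¹ • ((-t) • w) := by rw [smul_smul, div_eq_inv_mul]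
      _ = s⁻¹ • (s • v) := by rw [h1]
      _ = v := inv_smul_smul₀ hs v

private lemma projSet_nonempty {d : ℕ} (W : Submodule ℂ (Fin d → ℂ))
    (h : 1 ≤ Module.finrank ℂ W) :
    Set.Nonempty {x : Projectivization ℂ (Fin d → ℂ) |
      ∃ v, ∃ hv : v ≠ 0, x = Projectivization.mk ℂ v hv ∧ v ∈ W} := by
  have hbot : W ≠ ⊥ := by
    intro hb
    rw [hb, finrank_bot] at h
    omega
  obtain ⟨v, hvW, hv⟩ := Submodule.exists_mem_ne_zero_of_ne_bot hbot
  exact ⟨Projectivization.mk ℂ v hv, v, hv, rfl, hvW⟩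

private lemma projSet_infinite {d : ℕ} (W : Submodule ℂ (Fin d → ℂ))
    (h : 2 ≤ Module.finrank ℂ W) :
    Set.Infinite {x : Projectivization ℂ (Fin d → ℂ) |
      ∃ v, ∃ hv : v ≠ 0, x = Projectivization.mk ℂ v hv ∧ v ∈ W} := by
  have hbot : W ≠ ⊥ := by
    intro hb; rw [hb, finrank_bot] at h; omega
  obtain ⟨a, haW, ha⟩ := Submodule.exists_mem_ne_zero_of_ne_bot hbot
  have hspan : ∃ b ∈ W, b ∉ Submodule.span ℂ {a} := by
    by_contra hc
    push_neg at hc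
    have hle : W ≤ Submodule.span ℂ {a} := hc
    have := Submodule.finrank_mono hle
    rw [finrank_span_singleton ha] at this
    omega
  obtain ⟨b, hbW, hb⟩ := hspan
  have hLI : LinearIndependent ℂ ![b, a] := by
    have hb0 : b ≠ 0 := fun h0 => hb (by rw [h0]; exact Submodule.zero_mem _)
    rw [LinearIndependent.pair_iff' hb0]
    intro c hc
    have hc0 : c ≠ 0 := fun h0 => ha (by rw [← hc, h0, zero_smul])
    exact hb (Submodule.mem_span_singleton.mpr
      ⟨c⁻¹, by rw [← hc, smul_smul, inv_mul_cancel₀ hc0, one_smul]⟩)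
  have hpair : ∀ s t : ℂ, s • b + t • a = 0 → s = 0 ∧ t = 0 :=
    LinearIndependent.pair_iff.mp hLI
  have hne : ∀ c : ℂ, a + c • b ≠ 0 := by
    intro c hc
    have := hpair c 1 (by rw [← hc]; ring_nf; module)
    simp at this
  have hmem : ∀ c : ℂ, a + c • b ∈ W := fun c =>
    W.add_mem haW (W.smul_mem c hbW)
  apply Set.infinite_of_injective_forall_mem
    (f := fun c : ℂ => Projectivization.mk ℂ (a + c • b) (hne c))
  · intro c c' hcc
    rw [Projectivization.mk_eq_mk_iff] at hcc
    obtain ⟨u, hu⟩ := hcc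
    have hu' : (u : ℂ) • a + (u * c') • b = a + c • b := by
      rw [← hu, Units.smul_def, smul_add, smul_smul]
    have : (u * c' - c) • b + ((u : ℂ) - 1) • a = 0 := by
      have := sub_eq_zero_of_eq hu'
      rw [← this]; module
    obtain ⟨h1, h2⟩ := hpair _ _ this
    have hu1 : (u : ℂ) = 1 := sub_eq_zero.mp h2
    rw [sub_eq_zero, hu1, one_mul] at h1
    exact h1.symm
  · intro c
    exact ⟨a + c • b, hne c, rfl, hmem c⟩

private lemma eq_entries_iff {d : ℕ} (hd : 2 ≤ d) (M : Matrix (Fin d) (Fin d) ℂ)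
    (A : Matrix (Fin (d - 1)) (Fin d) ℂ)
    (hA : ∀ (k : Fin (d - 1)) (j : Fin d),
      A k j = M ⟨0, Nat.lt_of_lt_of_le Nat.two_pos hd⟩ j - M ⟨k.1 + 1, Nat.add_lt_of_lt_sub k.2⟩ j)
    (v : Fin d → ℂ) :
    (∀ s t, M.mulVec v s = M.mulVec v t) ↔ A.mulVec v = 0 := by
  have key : ∀ k : Fin (d - 1),
      A.mulVec v k = M.mulVec v ⟨0, by omega⟩ - M.mulVec v ⟨k.1 + 1, by have := k.2; omega⟩ := by
    intro k
    simp only [Matrix.mulVec, dotProduct, hA, sub_mul, Finset.sum_sub_distrib]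
  constructor
  · intro h
    funext k
    rw [key k, h ⟨0, by omega⟩ ⟨k.1 + 1, by have := k.2; omega⟩, sub_self]
    rfl
  · intro h
    have h0 : ∀ s : Fin d, M.mulVec v s = M.mulVec v ⟨0, by omega⟩ := by
      intro s
      rcases Nat.eq_zero_or_pos s.1 with hs | hs
      · congr 1
        exact Fin.ext hs
      · have hk : s.1 - 1 < d - 1 := by have := s.2; omega
        have hk2 := congrFun h ⟨s.1 - 1, hk⟩
        rw [key ⟨s.1 - 1, hk⟩] at hk2
        simp only [Pi.zero_apply, sub_eq_zero] at hk2
        have : (⟨(s.1 - 1) + 1, by omega⟩ : Fin d) = s := Fin.ext (by simp; omega)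
        rw [this] at hk2
        exact hk2.symm
    intro s t
    rw [h0 s, h0 t]

private lemma finrank_ker_eq {m d : ℕ} (A : Matrix (Fin m) (Fin d) ℂ) :
    Module.finrank ℂ (LinearMap.ker A.mulVecLin) = d - A.rank := by
  have h1 := LinearMap.finrank_range_add_finrank_ker A.mulVecLin
  rw [Module.finrank_fin_fun] at h1
  have h2 : A.rank = Module.finrank ℂ (LinearMap.range A.mulVecLin) := rfl
  omega

private lemma rank_le_sub_one {d : ℕ} (hd : 1 ≤ d) (A : Matrix (Fin (d - 1)) (Fin d) ℂ) :
    A.rank ≤ d - 1 := by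
  have := A.rank_le_card_height
  simpa using this

/-- for a two-player game `(X₁, X₂)` of format `(d, d)` over `ℂ`, with
difference matrices `A` (rows of `X₁`) and `B` (columns of `X₂`), the Nash equilibrium
set (inside `ℙ^{d-1} × ℙ^{d-1}`) is infinite iff `rank A ≤ d - 2` or `rank B ≤ d - 2`;
and if `rank A = rank B = d - 1` it consists of exactly one point. -/
theorem two_player_square_nash (d : ℕ) (hd : 2 ≤ d)
    (X1 X2 : Matrix (Fin d) (Fin d) ℂ) :
    let A : Matrix (Fin (d - 1)) (Fin d) ℂ :=
      fun k j => X1 ⟨0, by omega⟩ j - X1 ⟨k.1 + 1, by have := k.2; omega⟩ j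
    let B : Matrix (Fin (d - 1)) (Fin d) ℂ :=
      fun k i => X2 i ⟨0, by omega⟩ - X2 i ⟨k.1 + 1, by have := k.2; omega⟩
    let NashSet : Set (Projectivization ℂ (Fin d → ℂ) × Projectivization ℂ (Fin d → ℂ)) :=
      {p | ∃ (π1 π2 : Fin d → ℂ) (h1 : π1 ≠ 0) (h2 : π2 ≠ 0),
        p.1 = Projectivization.mk ℂ π1 h1 ∧ p.2 = Projectivization.mk ℂ π2 h2 ∧
        (∀ s t, X1.mulVec π2 s = X1.mulVec π2 t) ∧
        (∀ s t, X2.transpose.mulVec π1 s = X2.transpose.mulVec π1 t)}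
    (NashSet.Infinite ↔ A.rank ≤ d - 2 ∨ B.rank ≤ d - 2) ∧
    (A.rank = d - 1 → B.rank = d - 1 → ∃! p, p ∈ NashSet) := by
  intro A B NashSet
  set WA := LinearMap.ker A.mulVecLin with hWA
  set WB := LinearMap.ker B.mulVecLin with hWB
  set SA : Set (Projectivization ℂ (Fin d → ℂ)) :=
    {x | ∃ v, ∃ hv : v ≠ 0, x = Projectivization.mk ℂ v hv ∧ v ∈ WA} with hSA
  set SB : Set (Projectivization ℂ (Fin d → ℂ)) :=
    {x | ∃ v, ∃ hv : v ≠ 0, x = Projectivization.mk ℂ v hv ∧ v ∈ WB} with hSB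
  have hiffA : ∀ v, (∀ s t, X1.mulVec v s = X1.mulVec v t) ↔ v ∈ WA := by
    intro v
    rw [hWA, LinearMap.mem_ker, Matrix.mulVecLin_apply]
    exact eq_entries_iff hd X1 A (fun k j => rfl) v
  have hiffB : ∀ v, (∀ s t, X2.transpose.mulVec v s = X2.transpose.mulVec v t) ↔ v ∈ WB := by
    intro v
    rw [hWB, LinearMap.mem_ker, Matrix.mulVecLin_apply]
    exact eq_entries_iff hd X2.transpose B (fun k j => rfl) v
  have hNash : NashSet = SB ×ˢ SA := by
    ext p
    simp only [NashSet, SA, SB, Set.mem_setOf_eq, Set.mem_prod]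
    constructor
    · rintro ⟨π1, π2, h1, h2, hp1, hp2, hc1, hc2⟩
      exact ⟨⟨π1, h1, hp1, (hiffB π1).mp hc2⟩, ⟨π2, h2, hp2, (hiffA π2).mp hc1⟩⟩
    · rintro ⟨⟨π1, h1, hp1, hm1⟩, ⟨π2, h2, hp2, hm2⟩⟩
      exact ⟨π1, π2, h1, h2, hp1, hp2, (hiffA π2).mpr hm2, (hiffB π1).mpr hm1⟩
  have hrA : A.rank ≤ d - 1 := rank_le_sub_one (by omega) A
  have hrB : B.rank ≤ d - 1 := rank_le_sub_one (by omega) B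
  have hfA : Module.finrank ℂ WA = d - A.rank := finrank_ker_eq A
  have hfB : Module.finrank ℂ WB = d - B.rank := finrank_ker_eq B
  have hneA : SA.Nonempty := projSet_nonempty WA (by omega)
  have hneB : SB.Nonempty := projSet_nonempty WB (by omega)
  constructor
  · constructor
    · intro hinf
      by_contra hc
      push_neg at hc
      obtain ⟨hcA, hcB⟩ := hc
      have hsA : SA.Subsingleton := projSet_subsingleton WA (by omega)
      have hsB : SB.Subsingleton := projSet_subsingleton WB (by omega)
      have : NashSet.Subsingleton := by
        rw [hNash]
        rintro ⟨p1, p2⟩ ⟨hpB, hpA⟩ ⟨q1, q2⟩ ⟨hqB, hqA⟩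
        exact Prod.ext (hsB hpB hqB) (hsA hpA hqA)
      exact hinf this.finite
    · intro hor
      rw [hNash]
      rcases hor with hA2 | hB2
      · have hinfA : SA.Infinite := projSet_infinite WA (by omega)
        obtain ⟨b, hb⟩ := hneB
        apply Set.Infinite.mono (s := (fun x => (b, x)) '' SA)
        · rintro _ ⟨x, hx, rfl⟩
          exact ⟨hb, hx⟩
        · exact hinfA.image (fun x _ y _ h => (Prod.ext_iff.mp h).2)
      · have hinfB : SB.Infinite := projSet_infinite WB (by omega)
        obtain ⟨a, ha⟩ := hneA
        apply Set.Infinite.mono (s := (fun x => (x, a)) '' SB)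
        · rintro _ ⟨x, hx, rfl⟩
          exact ⟨hx, ha⟩
        · exact hinfB.image (fun x _ y _ h => (Prod.ext_iff.mp h).1)
  · intro hA1 hB1
    have hsA : SA.Subsingleton := projSet_subsingleton WA (by omega)
    have hsB : SB.Subsingleton := projSet_subsingleton WB (by omega)
    obtain ⟨a, ha⟩ := hneA
    obtain ⟨b, hb⟩ := hneB
    refine ⟨(b, a), ?_, ?_⟩
    · rw [hNash]; exact ⟨hb, ha⟩
    · rintro ⟨q1, q2⟩ hq
      rw [hNash] at hq
      exact Prod.ext (hsB hq.1 hb) (hsA hq.2 ha)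
end

section
/- Let 2 ≤ d_1 < d_2 and let X = (X^{(1)}, X^{(2)}) be a two-player game of format (d_1, d_2) over ℂ, with X^{(2)} = (x^{(2)}_{ik}) ∈ ℂ^{d_1×d_2}. The following are equivalent: (a) the Nash equilibrium set of X is nonempty; (b) the (d_1+1)×d_2 matrix obtained from X^{(2)} by appending a row with all entries equal to 1 has rank at most d_1; (c) the (d_2−1)×d_1 matrix B with entries B_{k,i} = x^{(2)}_{i,1} − x^{(2)}_{i,k+1} (1 ≤ k ≤ d_2−1, 1 ≤ i ≤ d_1) has rank at most d_1 − 1. -/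
open Matrix

lemma aux_rank_lt_iff {m n : ℕ} (A : Matrix (Fin m) (Fin n) ℂ) :
    A.rank < n ↔ ∃ v : Fin n → ℂ, v ≠ 0 ∧ A.mulVec v = 0 := by
  have h := LinearMap.finrank_range_add_finrank_ker A.mulVecLin
  rw [Module.finrank_fin_fun] at h
  have hrank : A.rank = Module.finrank ℂ (LinearMap.range A.mulVecLin) := rfl
  constructor
  · intro hlt
    have hker : 0 < Module.finrank ℂ (LinearMap.ker A.mulVecLin) := by omega
    rw [Module.finrank_pos_iff] at hker
    obtain ⟨⟨v, hv⟩, hvne⟩ := exists_ne (0 : LinearMap.ker A.mulVecLin)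
    refine ⟨v, ?_, ?_⟩
    · intro h0
      exact hvne (Subtype.ext h0)
    · simpa [Matrix.mulVecLin_apply] using hv
  · rintro ⟨v, hv0, hAv⟩
    have hvker : v ∈ LinearMap.ker A.mulVecLin := by
      simpa [Matrix.mulVecLin_apply] using hAv
    have : 0 < Module.finrank ℂ (LinearMap.ker A.mulVecLin) := by
      rw [Module.finrank_pos_iff]
      exact ⟨⟨v, hvker⟩, 0, fun h => hv0 (by simpa using congrArg Subtype.val h)⟩
    omega

lemma aux_rank_lt_iff_vecMul {m n : ℕ} (A : Matrix (Fin m) (Fin n) ℂ) :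
    A.rank < m ↔ ∃ v : Fin m → ℂ, v ≠ 0 ∧ Matrix.vecMul v A = 0 := by
  rw [← Matrix.rank_transpose]
  rw [aux_rank_lt_iff]
  simp_rw [Matrix.mulVec_transpose]

/-- for a two-player game `(X₁, X₂)` of format `(d₁, d₂)` with
`2 ≤ d₁ < d₂` over `ℂ`, the following are equivalent: (a) the Nash equilibrium set
is nonempty; (b) the `(d₁+1) × d₂` matrix obtained from `X₂` by appending an all-ones
row has rank at most `d₁`; (c) the `(d₂-1) × d₁` difference matrix `B` with
`B_{k,i} = x⁽²⁾_{i,1} - x⁽²⁾_{i,k+1}` has rank at most `d₁ - 1`. -/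
theorem two_player_nash_resultant (d1 d2 : ℕ) (hd1 : 2 ≤ d1) (h12 : d1 < d2)
    (X1 X2 : Matrix (Fin d1) (Fin d2) ℂ) :
    let M : Matrix (Fin (d1 + 1)) (Fin d2) ℂ :=
      fun i j => if h : i.1 < d1 then X2 ⟨i.1, h⟩ j else 1
    let B : Matrix (Fin (d2 - 1)) (Fin d1) ℂ :=
      fun k i => X2 i ⟨0, by omega⟩ - X2 i ⟨k.1 + 1, by have := k.2; omega⟩
    ((∃ (π1 : Fin d1 → ℂ) (π2 : Fin d2 → ℂ), π1 ≠ 0 ∧ π2 ≠ 0 ∧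
        (∀ s t, X1.mulVec π2 s = X1.mulVec π2 t) ∧
        (∀ s t, X2.transpose.mulVec π1 s = X2.transpose.mulVec π1 t)) ↔
      M.rank ≤ d1) ∧
    (M.rank ≤ d1 ↔ B.rank ≤ d1 - 1) := by
  intro M B
  set P : Prop := ∃ π1 : Fin d1 → ℂ, π1 ≠ 0 ∧
      (∀ s t, X2.transpose.mulVec π1 s = X2.transpose.mulVec π1 t) with hP
  have hMcast : ∀ (i : Fin d1) (j : Fin d2), M i.castSucc j = X2 i j :=
    fun i j => dif_pos i.is_lt
  have hMlast : ∀ j : Fin d2, M (Fin.last d1) j = 1 :=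
    fun j => dif_neg (lt_irrefl d1)
  -- there always exists a nonzero π2 with X1 * π2 = 0
  obtain ⟨π2, hπ2ne, hπ2⟩ : ∃ v : Fin d2 → ℂ, v ≠ 0 ∧ X1.mulVec v = 0 := by
    rw [← aux_rank_lt_iff]
    exact lt_of_le_of_lt X1.rank_le_height h12
  -- (a) ↔ P
  have haP : (∃ (π1 : Fin d1 → ℂ) (π2 : Fin d2 → ℂ), π1 ≠ 0 ∧ π2 ≠ 0 ∧
        (∀ s t, X1.mulVec π2 s = X1.mulVec π2 t) ∧
        (∀ s t, X2.transpose.mulVec π1 s = X2.transpose.mulVec π1 t)) ↔ P := by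
    constructor
    · rintro ⟨π1, _, h1, _, _, h4⟩; exact ⟨π1, h1, h4⟩
    · rintro ⟨π1, h1, h4⟩
      exact ⟨π1, π2, h1, hπ2ne, fun s t => by simp [hπ2], h4⟩
  -- P ↔ M.rank ≤ d1
  have hMP : M.rank ≤ d1 ↔ P := by
    have heq : M.rank ≤ d1 ↔ M.rank < d1 + 1 := by omega
    rw [heq, aux_rank_lt_iff_vecMul]
    constructor
    · rintro ⟨v, hv0, hvM⟩
      have hsum : ∀ j : Fin d2,
          ∑ i : Fin d1, v i.castSucc * X2 i j + v (Fin.last d1) = 0 := by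
        intro j
        have := congrFun hvM j
        rw [Matrix.vecMul] at this
        simp only [Pi.zero_apply, dotProduct] at this
        rw [Fin.sum_univ_castSucc] at this
        simpa only [hMcast, hMlast, mul_one] using this
      refine ⟨fun i => v i.castSucc, ?_, ?_⟩
      · intro h0
        apply hv0
        have hlast : v (Fin.last d1) = 0 := by
          have := hsum ⟨0, by omega⟩
          rw [Finset.sum_eq_zero (fun i _ => by
            have h := congrFun h0 i
            simp only [Pi.zero_apply] at h
            rw [h, zero_mul])] at this
          simpa using this
        ext i
        by_cases h : i.1 < d1
        · have : i = Fin.castSucc ⟨i.1, h⟩ := Fin.ext rfl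
          rw [this]
          exact congrFun h0 ⟨i.1, h⟩
        · have : i = Fin.last d1 := Fin.ext (by rw [Fin.val_last]; omega)
          rw [this]; exact hlast
      · intro s t
        have key : ∀ j : Fin d2,
            X2.transpose.mulVec (fun i => v i.castSucc) j = -v (Fin.last d1) := by
          intro j
          rw [Matrix.mulVec, dotProduct]
          simp only [Matrix.transpose_apply]
          have h1 : ∑ i : Fin d1, v i.castSucc * X2 i j = -v (Fin.last d1) :=
            eq_neg_of_add_eq_zero_left (hsum j)
          rw [← h1]
          exact Finset.sum_congr rfl fun i _ => mul_comm _ _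
        rw [key s, key t]
    · rintro ⟨π1, hπ1ne, hconst⟩
      set c : ℂ := X2.transpose.mulVec π1 ⟨0, by omega⟩ with hc
      refine ⟨Fin.snoc π1 (-c), ?_, ?_⟩
      · intro h0
        apply hπ1ne
        ext i
        have := congrFun h0 i.castSucc
        simpa [Fin.snoc_castSucc] using this
      · ext j
        rw [Matrix.vecMul]
        simp only [Pi.zero_apply, dotProduct]
        rw [Fin.sum_univ_castSucc]
        simp only [Fin.snoc_castSucc, Fin.snoc_last, hMcast, hMlast, mul_one]
        have hcj : c = X2.transpose.mulVec π1 j := hconst _ j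
        have hsums : ∑ i : Fin d1, π1 i * X2 i j = c := by
          rw [hcj, Matrix.mulVec, dotProduct]
          exact Finset.sum_congr rfl fun i _ => by
            simp [Matrix.transpose_apply, mul_comm]
        rw [hsums]; ring
  -- B.rank ≤ d1 - 1 ↔ P
  have hBP : B.rank ≤ d1 - 1 ↔ P := by
    have heq : B.rank ≤ d1 - 1 ↔ B.rank < d1 := by omega
    rw [heq, aux_rank_lt_iff]
    have hBmul : ∀ (π1 : Fin d1 → ℂ) (k : Fin (d2 - 1)),
        B.mulVec π1 k = X2.transpose.mulVec π1 ⟨0, by omega⟩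
          - X2.transpose.mulVec π1 ⟨k.1 + 1, by have := k.2; omega⟩ := by
      intro π1 k
      simp only [Matrix.mulVec, dotProduct, Matrix.transpose_apply, B]
      rw [← Finset.sum_sub_distrib]
      exact Finset.sum_congr rfl fun i _ => by ring
    constructor
    · rintro ⟨π1, hπ1ne, hBv⟩
      refine ⟨π1, hπ1ne, ?_⟩
      have key : ∀ s : Fin d2,
          X2.transpose.mulVec π1 s = X2.transpose.mulVec π1 ⟨0, by omega⟩ := by
        intro s
        rcases Nat.eq_zero_or_pos s.1 with hs | hs
        · congr 1; exact Fin.ext hs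
        · obtain ⟨k, hk⟩ : ∃ k : ℕ, s.1 = k + 1 := ⟨s.1 - 1, by omega⟩
          have hk2 : k < d2 - 1 := by have := s.2; omega
          have hz := congrFun hBv ⟨k, hk2⟩
          rw [hBmul] at hz
          simp only [Pi.zero_apply] at hz
          have hse : s = ⟨k + 1, by omega⟩ := Fin.ext hk
          rw [hse]
          exact (sub_eq_zero.mp hz).symm
      intro s t; rw [key s, key t]
    · rintro ⟨π1, hπ1ne, hconst⟩
      refine ⟨π1, hπ1ne, ?_⟩
      ext k
      rw [hBmul, hconst ⟨0, by omega⟩ ⟨k.1 + 1, by have := k.2; omega⟩]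
      simp
  exact ⟨haP.trans hMP.symm, hMP.trans hBP.symm⟩
end
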